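/- Let G and H be finite simple graphs, and let ℓ ≥ 1. If G has an H-partition that has layered width at most ℓ with respect to some layering of G, then the track number of G is at most 3·ℓ·tn(H). -/

import Mathlib

/-- A track layout of `G` with tracks indexed by `T`: an injective position map,
adjacent vertices on distinct tracks, and no X-crossing. -/
def IsTrackLayout {V : Type*} {T : Type*} (G : SimpleGraph V)
    (track : V → T) (pos : V → ℕ) : Prop :=
  Function.Injective pos ∧
  (∀ ⦃u v⦄, G.Adj u v → track u ≠ track v) ∧
  (∀ ⦃u v x y⦄, G.Adj u v → G.Adj x y → track u = track x → track v = track y →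
    pos u < pos x → pos y < pos v → False)

/-- The track number of `G`: the least `t` such that `G` has a `t`-track layout. -/
noncomputable def trackNumber {V : Type*} (G : SimpleGraph V) : ℕ :=
  sInf {t | ∃ (track : V → Fin t) (pos : V → ℕ), IsTrackLayout G track pos}

/-- From `a*N + c ≤ b*N + d` with `d < N` we get `a ≤ b`. -/
lemma digit_le {N a b c d : ℕ} (hd : d < N) (h : a * N + c ≤ b * N + d) : a ≤ b := by
  by_contra hab
  push_neg at hab
  have h2 : b * N + d < a * N + c := by
    calc b * N + d < b * N + N := by omega
      _ = (b + 1) * N := by ring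
      _ ≤ a * N := Nat.mul_le_mul_right N hab
      _ ≤ a * N + c := Nat.le_add_right _ _
  omega

/-- If `G` has an `H`-partition of layered width at most `ℓ ≥ 1` with respect to some
layering of `G`, then the track number of `G` is at most `3ℓ·tn(H)`. -/
theorem trackNumber_le_of_H_partition {V : Type*} {W : Type*} [Fintype V] [Fintype W]
    (G : SimpleGraph V) (H : SimpleGraph W) (ℓ : ℕ) (hℓ : 1 ≤ ℓ)
    (f : V → W) (hpart : ∀ ⦃u v⦄, G.Adj u v → f u = f v ∨ H.Adj (f u) (f v))
    (lev : V → ℕ) (hlev : ∀ ⦃u v⦄, G.Adj u v → Nat.dist (lev u) (lev v) ≤ 1)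
    (hwidth : ∀ (x : W) (i : ℕ), Set.ncard {v : V | f v = x ∧ lev v = i} ≤ ℓ) :
    trackNumber G ≤ 3 * ℓ * trackNumber H := by
  classical
  -- An optimal track layout of H exists.
  have hne : ({t | ∃ (track : W → Fin t) (pos : W → ℕ), IsTrackLayout H track pos}).Nonempty := by
    refine ⟨Fintype.card W, Fintype.equivFin W, fun w => (Fintype.equivFin W w).val, ?_, ?_, ?_⟩
    · intro a b hab
      exact (Fintype.equivFin W).injective (Fin.val_injective hab)
    · intro a b hab h
      exact hab.ne ((Fintype.equivFin W).injective h)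
    · intro u v x y _ _ hux hvy hp1 hp2
      have : v = y := (Fintype.equivFin W).injective hvy
      subst this
      omega
  obtain ⟨τ, p, hpinj, hτadj, hτX⟩ := Nat.sInf_mem hne
  set t := trackNumber H with ht
  -- set-up for the within-bag-and-layer index
  set r : V → ℕ := fun v => (Fintype.equivFin V v).val with hr
  have hrinj : Function.Injective r := fun a b hab =>
    (Fintype.equivFin V).injective (Fin.val_injective hab)
  set S : V → Finset V := fun v => Finset.univ.filter (fun u => f u = f v ∧ lev u = lev v)
    with hS
  have hScard : ∀ v, (S v).card ≤ ℓ := by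
    intro v
    have h := hwidth (f v) (lev v)
    rwa [show {u : V | f u = f v ∧ lev u = lev v} = (S v : Set V) by
      ext u; simp [hS], Set.ncard_coe_finset] at h
  have hvS : ∀ v, v ∈ S v := by intro v; simp [hS]
  set gval : V → ℕ := fun v => ((S v).filter (fun u => r u < r v)).card with hg
  have hgval : ∀ v, gval v < ℓ := by
    intro v
    have hsub : (S v).filter (fun u => r u < r v) ⊆ (S v).erase v := by
      intro u hu
      simp only [Finset.mem_filter] at hu
      refine Finset.mem_erase.2 ⟨?_, hu.1⟩
      intro h; subst h; omega
    have h1 : gval v ≤ ((S v).erase v).card := Finset.card_le_card hsub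
    have h2 : ((S v).erase v).card = (S v).card - 1 := Finset.card_erase_of_mem (hvS v)
    have h3 : 1 ≤ (S v).card := Finset.card_pos.2 ⟨v, hvS v⟩
    have := hScard v
    omega
  have hSeq : ∀ u x : V, f u = f x → lev u = lev x → S u = S x := by
    intro u x h1 h2
    ext w; simp [hS, h1, h2]
  have hginj : ∀ u x : V, f u = f x → lev u = lev x → gval u = gval x → u = x := by
    intro u x h1 h2 h3
    by_contra hne'
    have hrne : r u ≠ r x := fun h => hne' (hrinj h)
    -- wlog via cases
    rcases lt_or_gt_of_ne hrne with hlt | hlt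
    · have hsub : (S u).filter (fun w => r w < r u) ⊂ (S x).filter (fun w => r w < r x) := by
        rw [hSeq u x h1 h2]
        constructor
        · intro w hw
          simp only [Finset.mem_filter] at hw ⊢
          exact ⟨hw.1, by omega⟩
        · intro hcon
          have hu : u ∈ (S x).filter (fun w => r w < r x) := by
            simp only [Finset.mem_filter]
            exact ⟨(hSeq u x h1 h2) ▸ hvS u, hlt⟩
          have := hcon hu
          simp only [Finset.mem_filter] at this
          omega
      have := Finset.card_lt_card hsub
      simp only [hg] at h3
      omega
    · have hsub : (S x).filter (fun w => r w < r x) ⊂ (S u).filter (fun w => r w < r u) := by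
        rw [hSeq u x h1 h2]
        constructor
        · intro w hw
          simp only [Finset.mem_filter] at hw ⊢
          exact ⟨hw.1, by omega⟩
        · intro hcon
          have hu : x ∈ (S x).filter (fun w => r w < r u) := by
            simp only [Finset.mem_filter]
            exact ⟨hvS x, hlt⟩
          have := hcon hu
          simp only [Finset.mem_filter] at this
          omega
      have := Finset.card_lt_card hsub
      simp only [hg] at h3
      omega
  set g : V → Fin ℓ := fun v => ⟨gval v, hgval v⟩ with hgdef
  -- position encoding
  set N : ℕ := 1 + Finset.univ.sup (fun v : V => p (f v)) with hN
  have hpN : ∀ v : V, p (f v) < N := by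
    intro v
    have : p (f v) ≤ Finset.univ.sup (fun v : V => p (f v)) :=
      Finset.le_sup (f := fun v : V => p (f v)) (Finset.mem_univ v)
    omega
  set C : ℕ := Fintype.card V + 1 with hC
  have hrC : ∀ v : V, r v < C := by
    intro v
    have := (Fintype.equivFin V v).isLt
    simp only [hr, hC]
    omega
  set key : V → ℕ := fun v => lev v * N + p (f v) with hkey
  set pos : V → ℕ := fun v => key v * C + r v with hposdef
  have hposinj : Function.Injective pos := by
    intro a b hab
    have hra : r a = pos a % C := by
      simp only [hposdef]
      rw [mul_comm, Nat.mul_add_mod, Nat.mod_eq_of_lt (hrC a)]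
    have hrb : r b = pos b % C := by
      simp only [hposdef]
      rw [mul_comm, Nat.mul_add_mod, Nat.mod_eq_of_lt (hrC b)]
    exact hrinj (by rw [hra, hrb, hab])
  have hkey_le : ∀ a b : V, pos a < pos b → key a ≤ key b := by
    intro a b hab
    exact digit_le (hrC b) (le_of_lt hab)
  have hlev_le : ∀ a b : V, key a ≤ key b → lev a ≤ lev b := by
    intro a b hab
    exact digit_le (hpN b) hab
  -- the track map
  set trk : V → Fin t × Fin 3 × Fin ℓ :=
    fun v => (τ (f v), ⟨lev v % 3, Nat.mod_lt _ (by norm_num)⟩, g v) with htrk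
  set e : (Fin t × Fin 3 × Fin ℓ) ≃ Fin (3 * ℓ * t) :=
    ((Equiv.prodCongr (Equiv.refl (Fin t)) finProdFinEquiv).trans finProdFinEquiv).trans
      (finCongr (by ring)) with he
  refine Nat.sInf_le ⟨fun v => e (trk v), pos, hposinj, ?_, ?_⟩
  · -- adjacent vertices on distinct tracks
    intro u v huv hcon
    have h : trk u = trk v := e.injective hcon
    simp only [htrk, Prod.mk.injEq, Prod.ext_iff] at h
    obtain ⟨h1, h2, h3⟩ := h
    rcases hpart huv with hfeq | hadj
    · by_cases hl : lev u = lev v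
      · have : gval u = gval v := by
          have := congrArg Fin.val h3
          simpa [hgdef] using this
        exact huv.ne (hginj u v hfeq hl this)
      · have hd := hlev huv
        simp only [Nat.dist] at hd
        have h2' : lev u % 3 = lev v % 3 := by
          have := congrArg Fin.val h2
          simpa using this
        omega
    · exact hτadj hadj h1
  · -- no X-crossing
    intro u v x y huv hxy hux hvy hp1 hp2
    have hux' : trk u = trk x := e.injective hux
    have hvy' : trk v = trk y := e.injective hvy
    simp only [htrk, Prod.mk.injEq, Prod.ext_iff] at hux' hvy'
    obtain ⟨hτux, hmux, hgux⟩ := hux'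
    obtain ⟨hτvy, hmvy, hgvy⟩ := hvy'
    have hmux' : lev u % 3 = lev x % 3 := by
      have := congrArg Fin.val hmux; simpa using this
    have hmvy' : lev v % 3 = lev y % 3 := by
      have := congrArg Fin.val hmvy; simpa using this
    have hgux' : gval u = gval x := by
      have := congrArg Fin.val hgux; simpa [hgdef] using this
    have hgvy' : gval v = gval y := by
      have := congrArg Fin.val hgvy; simpa [hgdef] using this
    have hk1 : key u ≤ key x := hkey_le u x hp1
    have hk2 : key y ≤ key v := hkey_le y v hp2
    have hl1 : lev u ≤ lev x := hlev_le u x hk1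
    have hl2 : lev y ≤ lev v := hlev_le y v hk2
    have hd1 := hlev huv
    have hd2 := hlev hxy
    simp only [Nat.dist] at hd1 hd2
    have hlev1 : lev u = lev x ∧ lev v = lev y := by omega
    obtain ⟨hlux, hlvy⟩ := hlev1
    -- positions in H
    have hune : u ≠ x := fun h => by subst h; omega
    have hvne : y ≠ v := fun h => by subst h; omega
    have hpux : p (f u) < p (f x) := by
      have hle : p (f u) ≤ p (f x) := by
        simp only [hkey, hlux] at hk1
        omega
      rcases lt_or_eq_of_le hle with h | h
      · exact h
      · exact absurd (hginj u x (hpinj h) hlux hgux') hune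
    have hpyv : p (f y) < p (f v) := by
      have hle : p (f y) ≤ p (f v) := by
        simp only [hkey, hlvy] at hk2
        omega
      rcases lt_or_eq_of_le hle with h | h
      · exact h
      · exact absurd (hginj y v (hpinj h) hlvy.symm hgvy'.symm) hvne
    rcases hpart huv with huv' | huv' <;> rcases hpart hxy with hxy' | hxy'
    · -- both intra-bag
      rw [huv'] at hpux
      rw [hxy'] at hpux
      omega
    · -- uv intra-bag, xy inter-bag
      exact hτadj hxy' (by rw [← hτux, huv']; exact hτvy)
    · -- uv inter-bag, xy intra-bag
      exact hτadj huv' (by rw [hτux, hxy']; exact hτvy.symm)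
    · exact hτX huv' hxy' hτux hτvy hpux hpyv
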